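/- For every ξ ∈ [-π, π], the quantity c₁² - 4c₂, where c₁ = 2a(9 + cos ξ) sin²(ξ/2)/Δx² and c₂ = 64 a² sin⁴(ξ/2)/Δx⁴, equals (8a²/Δx⁴)(17 + cos ξ) sin⁴(ξ/2) cos²(ξ/2), and hence is nonnegative. Consequently the two roots of λ² + c₁λ + c₂ = 0 are real. -/
import Mathlib


theorem stmt_1 (a Δx : ℝ) (ha : 0 < a) (hΔx : 0 < Δx) :
    ∀ ξ ∈ Set.Icc (-Real.pi) Real.pi,
    ∀ c₁ c₂ : ℝ,
    c₁ = 2 * a * (9 + Real.cos ξ) * Real.sin (ξ/2) ^ 2 / Δx ^ 2 →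
    c₂ = 64 * a ^ 2 * Real.sin (ξ/2) ^ 4 / Δx ^ 4 →
    (c₁ ^ 2 - 4 * c₂ =
        (8 * a ^ 2 / Δx ^ 4) * (17 + Real.cos ξ) * Real.sin (ξ/2) ^ 4 * Real.cos (ξ/2) ^ 2)
    ∧ 0 ≤ c₁ ^ 2 - 4 * c₂
    ∧ ∃ r₁ r₂ : ℝ, ∀ x : ℝ, x ^ 2 + c₁ * x + c₂ = (x - r₁) * (x - r₂) := by
  intro ξ hξ c₁ c₂ h1 h2
  have hΔ : Δx ^ 2 ≠ 0 := by positivity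
  have hΔ4 : Δx ^ 4 ≠ 0 := by positivity
  have hpy : Real.cos (ξ/2) ^ 2 = 1 - Real.sin (ξ/2) ^ 2 := by
    have := Real.sin_sq_add_cos_sq (ξ/2); linarith
  have hcos : Real.cos ξ = 1 - 2 * Real.sin (ξ/2) ^ 2 := by
    nth_rewrite 1 [show ξ = 2 * (ξ/2) by ring]
    rw [Real.cos_two_mul]
    nlinarith [Real.sin_sq_add_cos_sq (ξ/2)]
  have key : c₁ ^ 2 - 4 * c₂ =
      (8 * a ^ 2 / Δx ^ 4) * (17 + Real.cos ξ) * Real.sin (ξ/2) ^ 4 * Real.cos (ξ/2) ^ 2 := by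
    subst h1 h2
    rw [hcos, hpy]
    field_simp
    ring
  refine ⟨key, ?_, ?_⟩
  · rw [key]
    have h17 : (0:ℝ) ≤ 17 + Real.cos ξ := by nlinarith [Real.neg_one_le_cos ξ]
    have : (0:ℝ) ≤ 8 * a ^ 2 / Δx ^ 4 := by positivity
    have := mul_nonneg (mul_nonneg (mul_nonneg this h17) (by positivity : (0:ℝ) ≤ Real.sin (ξ/2)^4)) (by positivity : (0:ℝ) ≤ Real.cos (ξ/2)^2)
    linarith
  · have hD : 0 ≤ c₁ ^ 2 - 4 * c₂ := by
      rw [key]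
      have h17 : (0:ℝ) ≤ 17 + Real.cos ξ := by nlinarith [Real.neg_one_le_cos ξ]
      have h0 : (0:ℝ) ≤ 8 * a ^ 2 / Δx ^ 4 := by positivity
      have := mul_nonneg (mul_nonneg (mul_nonneg h0 h17) (by positivity : (0:ℝ) ≤ Real.sin (ξ/2)^4)) (by positivity : (0:ℝ) ≤ Real.cos (ξ/2)^2)
      linarith
    have hs : Real.sqrt (c₁ ^ 2 - 4 * c₂) ^ 2 = c₁ ^ 2 - 4 * c₂ := Real.sq_sqrt hD
    refine ⟨(-c₁ + Real.sqrt (c₁ ^ 2 - 4 * c₂)) / 2, (-c₁ - Real.sqrt (c₁ ^ 2 - 4 * c₂)) / 2, fun x => ?_⟩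
    linear_combination hs / 4
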